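/- Consider f and h as in (P₁) and the equality-constrained problem (EP): minimize f(x,u,w) subject to h(x,u,w) = 0. Suppose: (i) there exist points v₋ and v₊ with h(v₋) < 0 and h(v₊) > 0; and (ii) k ≥ 1 or αᵢ ≠ 0 for some i. Then the infimum of (EP) equals the infimum of the problem (EP₁): minimize Σᵢ(δᵢyᵢ + eᵢxᵢ) + Σⱼ ζⱼzⱼ + c₀ over x, y ∈ ℝ^l, z ∈ ℝ^k subject to Σᵢ(αᵢyᵢ + bᵢxᵢ) + Σⱼ zⱼ + c = 0 and ½xᵢ² ≤ yᵢ for all i (as extended real numbers). Moreover, if (EP₁) attains its infimum, then it attains it at a point with ½x̄ᵢ² = ȳᵢ for all i; and if ζᵢ ≠ ζⱼ for some i ≠ j, then (EP) is unbounded from below. -/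

import Mathlib

open scoped Classical

/-- The objective `f(x,u,w) = Σᵢ(½δᵢxᵢ² + eᵢxᵢ) + Σⱼ(ζⱼuⱼwⱼ + ½wⱼ² + ηⱼwⱼ)` of problem (P₁). -/
noncomputable def quadObj {l k : ℕ} (δ e : Fin l → ℝ) (ζ η : Fin k → ℝ)
    (x : Fin l → ℝ) (u w : Fin k → ℝ) : ℝ :=
  (∑ i, ((1/2) * δ i * x i ^ 2 + e i * x i)) +
    ∑ j, (ζ j * u j * w j + (1/2) * w j ^ 2 + η j * w j)

/-- The constraint function `h(x,u,w) = Σᵢ(½αᵢxᵢ² + bᵢxᵢ) + Σⱼ uⱼwⱼ + c` of problem (P₁). -/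
noncomputable def quadCon {l k : ℕ} (α b : Fin l → ℝ) (c : ℝ)
    (x : Fin l → ℝ) (u w : Fin k → ℝ) : ℝ :=
  (∑ i, ((1/2) * α i * x i ^ 2 + b i * x i)) + (∑ j, u j * w j) + c

/-- The SOCP objective `Σᵢ(δᵢyᵢ + eᵢxᵢ) + Σⱼ ζⱼzⱼ + c₀` of problem (P₂). -/
noncomputable def socpObj {l k : ℕ} (δ e : Fin l → ℝ) (ζ : Fin k → ℝ) (c₀ : ℝ)
    (x y : Fin l → ℝ) (z : Fin k → ℝ) : ℝ :=
  (∑ i, (δ i * y i + e i * x i)) + (∑ j, ζ j * z j) + c₀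

/-- The linear part `Σᵢ(αᵢyᵢ + bᵢxᵢ) + Σⱼ zⱼ` of the SOCP constraint in (P₂). -/
noncomputable def socpConLhs {l k : ℕ} (α b : Fin l → ℝ)
    (x y : Fin l → ℝ) (z : Fin k → ℝ) : ℝ :=
  (∑ i, (α i * y i + b i * x i)) + ∑ j, z j

/-- The optimal value (in the extended reals) of the equality-constrained SOCP problem (EP₁). -/
noncomputable def socpValEq {l k : ℕ} (δ e α b : Fin l → ℝ) (ζ : Fin k → ℝ) (c c₀ : ℝ) : EReal :=
  sInf {v : EReal | ∃ (x y : Fin l → ℝ) (z : Fin k → ℝ),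
    socpConLhs α b x y z + c = 0 ∧ (∀ i, (1/2) * x i ^ 2 ≤ y i) ∧
    v = (socpObj δ e ζ c₀ x y z : EReal)}

lemma neg_quad (a L K M N : ℝ) (ha : a < 0) :
    ∃ n : ℝ, 1 ≤ n ∧ N ≤ n ∧ a*n^2 + L*n + K < M := by
  refine ⟨max (max 1 N) ((|L| + |K - M| + 1)/(-a)), le_trans (le_max_left 1 N) (le_max_left _ _),
    le_trans (le_max_right 1 N) (le_max_left _ _), ?_⟩
  set n := max (max 1 N) ((|L| + |K - M| + 1)/(-a)) with hn
  have h1 : (1:ℝ) ≤ n := le_trans (le_max_left 1 N) (le_max_left _ _)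
  have h2 : (|L| + |K - M| + 1)/(-a) ≤ n := le_max_right _ _
  have h3 : |L| + |K - M| + 1 ≤ (-a) * n := by
    rw [div_le_iff₀ (by linarith)] at h2; linarith [h2]
  have h4 : a * n + |L| + |K - M| ≤ -1 := by nlinarith
  have h5 : L * n ≤ |L| * n := by
    have := le_abs_self L; nlinarith
  have h6 : K - M ≤ |K - M| := le_abs_self _
  nlinarith [abs_nonneg L, abs_nonneg (K - M)]

lemma ereal_sInf_eq_bot_of_unbdd {S : Set EReal} (h : ∀ M : ℝ, ∃ v ∈ S, v < (M : EReal)) :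
    sInf S = ⊥ := by
  rw [sInf_eq_bot]
  intro b hb
  induction b using EReal.rec with
  | bot => exact absurd hb (lt_irrefl _)
  | coe r => exact h r
  | top => obtain ⟨v, hv, hlt⟩ := h 0; exact ⟨v, hv, lt_of_lt_of_le hlt le_top⟩

lemma ereal_le_of_forall_eps {S : Set EReal} {V : ℝ}
    (h : ∀ ε : ℝ, 0 < ε → sInf S ≤ ((V + ε : ℝ) : EReal)) : sInf S ≤ (V : EReal) := by
  by_contra hc
  push_neg at hc
  obtain ⟨m, hm1, hm2⟩ := exists_between hc
  induction m using EReal.rec with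
  | bot => exact absurd hm1 (by simp)
  | coe r =>
      have hr : V < r := by exact_mod_cast hm1
      have := h (r - V) (by linarith)
      rw [show V + (r - V) = r by ring] at this
      exact absurd (lt_of_le_of_lt this hm2) (lt_irrefl _)
  | top => exact absurd hm2 (by simp)

lemma key1 (α δ b e x y : ℝ) (hα : α ≠ 0) (hy : 1/2 * x^2 ≤ y) :
    ∃ t : ℝ, 1/2*α*t^2 + b*t = α*y + b*x ∧ 1/2*δ*t^2 + e*t ≤ δ*y + e*x := by
  have hD : 0 ≤ (α*x+b)^2 + 2*α^2*(y - 1/2*x^2) := by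
    nlinarith [sq_nonneg (α*x+b), sq_nonneg α]
  set s := Real.sqrt ((α*x+b)^2 + 2*α^2*(y - 1/2*x^2)) with hs_def
  have hs : s^2 = (α*x+b)^2 + 2*α^2*(y - 1/2*x^2) := Real.sq_sqrt hD
  have hcon : ∀ σ : ℝ, σ = 1 ∨ σ = -1 →
      1/2*α*((-b + σ*s)/α)^2 + b*((-b + σ*s)/α) = α*y + b*x := by
    rintro σ (rfl | rfl) <;>
    · field_simp
      linear_combination hs
  have hprod : (((-b + -1*s)/α) - x) * (((-b + 1*s)/α) - x) ≤ 0 := by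
    have heq : (((-b + -1*s)/α) - x) * (((-b + 1*s)/α) - x) * α^2
        = (α*x+b)^2 - s^2 := by field_simp; ring
    rw [hs] at heq
    have hα2 : (0:ℝ) < α^2 := by positivity
    nlinarith [heq, hα2, hy]
  have hid : ∀ t : ℝ, 1/2*α*t^2 + b*t = α*y + b*x →
      ((α*e - δ*b)/α) * (t - x) ≤ 0 → 1/2*δ*t^2 + e*t ≤ δ*y + e*x := by
    intro t ht hCt
    have h : α * ((1/2*δ*t^2 + e*t) - (δ*y + e*x)) = (α*e - δ*b) * (t - x) := by
      linear_combination δ * ht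
    have h2 : (1/2*δ*t^2 + e*t) - (δ*y + e*x) = ((α*e - δ*b)/α) * (t - x) := by
      field_simp
      linear_combination h + δ * ht
    linarith [h2 ▸ hCt]
  rcases le_or_gt (((α*e - δ*b)/α) * (((-b + -1*s)/α) - x)) 0 with h | h
  · exact ⟨_, hcon (-1) (Or.inr rfl), hid _ (hcon (-1) (Or.inr rfl)) h⟩
  · refine ⟨_, hcon 1 (Or.inl rfl), hid _ (hcon 1 (Or.inl rfl)) ?_⟩
    nlinarith [hprod, sq_nonneg ((α*e - δ*b)/α)]

lemma exists_root (l : ℕ) (α b : Fin l → ℝ) (c : ℝ) (xm xp : Fin l → ℝ)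
    (hneg : (∑ i, ((1/2) * α i * (xm i)^2 + b i * (xm i))) + c < 0)
    (hpos : 0 < (∑ i, ((1/2) * α i * (xp i)^2 + b i * (xp i))) + c) :
    ∃ x : Fin l → ℝ, (∑ i, ((1/2) * α i * (x i)^2 + b i * (x i))) + c = 0 := by
  set f : ℝ → ℝ := fun t =>
    (∑ i, ((1/2) * α i * ((1-t) * xm i + t * xp i)^2 + b i * ((1-t) * xm i + t * xp i))) + c
    with hf
  have hcont : Continuous f := by
    apply Continuous.add _ continuous_const
    apply continuous_finset_sum
    intro i _
    fun_prop
  have h0 : f 0 < 0 := by simpa [hf] using hneg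
  have h1 : 0 < f 1 := by simpa [hf] using hpos
  have : (0:ℝ) ∈ Set.Icc (f 0) (f 1) := ⟨le_of_lt h0, le_of_lt h1⟩
  obtain ⟨t, _, ht⟩ := intermediate_value_Icc (by norm_num : (0:ℝ) ≤ 1)
    hcont.continuousOn this
  exact ⟨fun i => (1-t) * xm i + t * xp i, ht⟩


lemma easy_pt {l k : ℕ} (δ e α b : Fin l → ℝ) (ζ η : Fin k → ℝ) (c c₀ : ℝ)
    (hc₀ : c₀ = -(1/2) * ∑ j, η j ^ 2) (x : Fin l → ℝ) (u w : Fin k → ℝ) :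
    socpConLhs α b x (fun i => (1/2) * x i ^ 2) (fun j => u j * w j) + c
      = quadCon α b c x u w ∧
    socpObj δ e ζ c₀ x (fun i => (1/2) * x i ^ 2) (fun j => u j * w j)
      ≤ quadObj δ e ζ η x u w := by
  constructor
  · unfold socpConLhs quadCon
    have h1 : ∑ i, (α i * ((1/2) * x i ^ 2) + b i * x i)
        = ∑ i, ((1/2) * α i * x i ^ 2 + b i * x i) :=
      Finset.sum_congr rfl fun i _ => by ring
    rw [h1]
  · unfold socpObj quadObj
    have h1 : ∑ i, (δ i * ((1/2) * x i ^ 2) + e i * x i)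
        = ∑ i, ((1/2) * δ i * x i ^ 2 + e i * x i) :=
      Finset.sum_congr rfl fun i _ => by ring
    have h2 : ∑ j, (ζ j * u j * w j + (1/2) * w j ^ 2 + η j * w j)
        = (∑ j, ζ j * (u j * w j)) + ∑ j, ((1/2) * (w j + η j)^2 - (1/2) * η j ^ 2) := by
      rw [← Finset.sum_add_distrib]
      exact Finset.sum_congr rfl fun j _ => by ring
    have h3 : ∑ j, ((1/2) * (w j + η j)^2 - (1/2) * η j ^ 2)
        = (∑ j, (1/2) * (w j + η j)^2) - (1/2) * ∑ j, η j ^ 2 := by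
      rw [Finset.sum_sub_distrib, Finset.mul_sum]
    have h4 : 0 ≤ ∑ j, (1/2) * (w j + η j)^2 :=
      Finset.sum_nonneg fun j _ => by positivity
    rw [h1, h2, h3, hc₀]
    linarith


lemma mainpt {l : ℕ} (δ e α b : Fin l → ℝ) (hδ : ∀ i, α i = 0 → 0 ≤ δ i)
    (x y : Fin l → ℝ) (hy : ∀ i, (1/2) * x i ^ 2 ≤ y i) :
    ∃ x' : Fin l → ℝ,
      (∀ i, (1/2) * α i * x' i ^ 2 + b i * x' i = α i * y i + b i * x i) ∧
      (∀ i, (1/2) * δ i * x' i ^ 2 + e i * x' i ≤ δ i * y i + e i * x i) := by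
  have H : ∀ i, ∃ t : ℝ, (1/2) * α i * t ^ 2 + b i * t = α i * y i + b i * x i ∧
      (1/2) * δ i * t ^ 2 + e i * t ≤ δ i * y i + e i * x i := by
    intro i
    by_cases h : α i = 0
    · refine ⟨x i, by rw [h]; ring, ?_⟩
      have h1 := hδ i h
      have h2 := hy i
      nlinarith
    · obtain ⟨t, ht1, ht2⟩ := key1 (α i) (δ i) (b i) (e i) (x i) (y i) h (by
        have := hy i; linarith)
      exact ⟨t, by linarith [ht1], by linarith [ht2]⟩
  choose x' h1 h2 using H
  exact ⟨x', h1, h2⟩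


lemma unbddA {l k : ℕ} (δ e α b : Fin l → ℝ) (ζ η : Fin k → ℝ) (c : ℝ)
    (i j : Fin k) (hij : i ≠ j) (hζ : ζ i ≠ ζ j) (M : ℝ) :
    ∃ (x : Fin l → ℝ) (u w : Fin k → ℝ),
      quadCon α b c x u w = 0 ∧ quadObj δ e ζ η x u w < M := by
  set K : ℝ := -(ζ j) * c + 1 + η i + η j with hK
  set P : ℝ := (M - K - 1)/(ζ i - ζ j) with hP
  have hζne : ζ i - ζ j ≠ 0 := sub_ne_zero.mpr hζ
  refine ⟨fun _ => 0, fun t => if t = i then P else if t = j then -P - c else 0,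
    fun t => if t = i then 1 else if t = j then 1 else 0, ?_, ?_⟩
  · unfold quadCon
    have h1 : ∑ i' : Fin l, ((1/2) * α i' * (0:ℝ) ^ 2 + b i' * 0) = 0 := by simp
    have h2 : ∑ t : Fin k, ((if t = i then P else if t = j then -P - c else 0) *
        (if t = i then (1:ℝ) else if t = j then 1 else 0))
        = P * 1 + (-P - c) * 1 := by
      rw [Finset.sum_eq_add_of_mem i j (Finset.mem_univ _) (Finset.mem_univ _) hij ?_]
      · simp [hij, hij.symm, if_neg]
      · intro t _ ⟨hti, htj⟩
        simp [hti, htj]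
    rw [h1, h2]; ring
  · unfold quadObj
    have h1 : ∑ i' : Fin l, ((1/2) * δ i' * (0:ℝ) ^ 2 + e i' * 0) = 0 := by simp
    have h2 : ∑ t : Fin k, (ζ t * (if t = i then P else if t = j then -P - c else 0) *
        (if t = i then (1:ℝ) else if t = j then 1 else 0)
        + (1/2) * (if t = i then (1:ℝ) else if t = j then 1 else 0) ^ 2
        + η t * (if t = i then (1:ℝ) else if t = j then 1 else 0))
        = (ζ i * P * 1 + (1/2) * 1 ^ 2 + η i * 1)
          + (ζ j * (-P - c) * 1 + (1/2) * 1 ^ 2 + η j * 1) := by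
      rw [Finset.sum_eq_add_of_mem i j (Finset.mem_univ _) (Finset.mem_univ _) hij ?_]
      · simp [hij, hij.symm, if_neg]
      · intro t _ ⟨hti, htj⟩
        simp [hti, htj]
    rw [h1, h2]
    have hval : ζ i * P * 1 + (1/2) * 1 ^ 2 + η i * 1
        + (ζ j * (-P - c) * 1 + (1/2) * 1 ^ 2 + η j * 1) = (ζ i - ζ j) * P + K := by
      rw [hK]; ring
    have hPval : (ζ i - ζ j) * P = M - K - 1 := by
      rw [hP]; field_simp
    rw [zero_add, hval, hPval]; linarith


lemma unbddU1 {l k : ℕ} (δ e α b : Fin l → ℝ) (ζ η : Fin k → ℝ) (c : ℝ)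
    (i : Fin l) (hαi : α i = 0) (hδi : δ i < 0) (j₀ : Fin k) (M : ℝ) :
    ∃ (x : Fin l → ℝ) (u w : Fin k → ℝ),
      quadCon α b c x u w = 0 ∧ quadObj δ e ζ η x u w < M := by
  obtain ⟨n, hn1, -, hnM⟩ := neg_quad ((1/2) * δ i) (e i - ζ j₀ * b i)
    (-(ζ j₀) * c + 1/2 + η j₀) M 1 (by linarith)
  refine ⟨fun t => if t = i then n else 0,
    fun t => if t = j₀ then -(b i * n) - c else 0,
    fun t => if t = j₀ then 1 else 0, ?_, ?_⟩
  · unfold quadCon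
    have h1 : ∑ t : Fin l, ((1/2) * α t * (if t = i then n else 0) ^ 2
        + b t * (if t = i then n else 0)) = (1/2) * α i * n ^ 2 + b i * n := by
      rw [Fintype.sum_eq_single i ?_]
      · simp
      · intro t ht; simp [ht]
    have h2 : ∑ t : Fin k, ((if t = j₀ then -(b i * n) - c else 0) *
        (if t = j₀ then (1:ℝ) else 0)) = -(b i * n) - c := by
      rw [Fintype.sum_eq_single j₀ ?_]
      · simp
      · intro t ht; simp [ht]
    rw [h1, h2, hαi]; ring
  · unfold quadObj
    have h1 : ∑ t : Fin l, ((1/2) * δ t * (if t = i then n else 0) ^ 2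
        + e t * (if t = i then n else 0)) = (1/2) * δ i * n ^ 2 + e i * n := by
      rw [Fintype.sum_eq_single i ?_]
      · simp
      · intro t ht; simp [ht]
    have h2 : ∑ t : Fin k, (ζ t * (if t = j₀ then -(b i * n) - c else 0) *
        (if t = j₀ then (1:ℝ) else 0)
        + (1/2) * (if t = j₀ then (1:ℝ) else 0) ^ 2
        + η t * (if t = j₀ then (1:ℝ) else 0))
        = ζ j₀ * (-(b i * n) - c) * 1 + (1/2) * 1 ^ 2 + η j₀ * 1 := by
      rw [Fintype.sum_eq_single j₀ ?_]
      · simp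
      · intro t ht; simp [ht]
    rw [h1, h2]
    nlinarith [hnM]


lemma unbddU2 {l k : ℕ} [IsEmpty (Fin k)] (δ e α b : Fin l → ℝ) (ζ η : Fin k → ℝ) (c : ℝ)
    (i : Fin l) (hαi : α i = 0) (hbi : b i = 0) (hδi : δ i < 0)
    (x₀ : Fin l → ℝ) (hx₀ : (∑ t, ((1/2) * α t * x₀ t ^ 2 + b t * x₀ t)) + c = 0) (M : ℝ) :
    ∃ (x : Fin l → ℝ) (u w : Fin k → ℝ),
      quadCon α b c x u w = 0 ∧ quadObj δ e ζ η x u w < M := by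
  obtain ⟨n, hn1, -, hnM⟩ := neg_quad ((1/2) * δ i) (e i)
    ((∑ t, ((1/2) * δ t * x₀ t ^ 2 + e t * x₀ t)) - ((1/2) * δ i * x₀ i ^ 2 + e i * x₀ i))
    M 1 (by linarith)
  refine ⟨fun t => if t = i then n else x₀ t, fun t => 0, fun t => 0, ?_, ?_⟩
  · unfold quadCon
    have hk0 : ∑ t : Fin k, (0:ℝ) * 0 = 0 := by simp
    have h1 : ∑ t : Fin l, ((1/2) * α t * (if t = i then n else x₀ t) ^ 2
        + b t * (if t = i then n else x₀ t))
        = ∑ t, ((1/2) * α t * x₀ t ^ 2 + b t * x₀ t) := by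
      refine Finset.sum_congr rfl fun t _ => ?_
      by_cases ht : t = i
      · subst ht; rw [if_pos rfl, hαi, hbi]; ring
      · rw [if_neg ht]
    rw [hk0, h1]
    linarith [hx₀]
  · unfold quadObj
    have hk0 : ∑ t : Fin k, (ζ t * 0 * 0 + (1/2) * (0:ℝ) ^ 2 + η t * 0) = 0 := by simp
    have h1 : (∑ t : Fin l, ((1/2) * δ t * (if t = i then n else x₀ t) ^ 2
        + e t * (if t = i then n else x₀ t)))
        - ∑ t, ((1/2) * δ t * x₀ t ^ 2 + e t * x₀ t)
        = ((1/2) * δ i * n ^ 2 + e i * n) - ((1/2) * δ i * x₀ i ^ 2 + e i * x₀ i) := by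
      rw [← Finset.sum_sub_distrib]
      rw [Fintype.sum_eq_single i ?_]
      · rw [if_pos rfl]
      · intro t ht; rw [if_neg ht]; ring
    rw [hk0]
    nlinarith [hnM, h1]


set_option maxHeartbeats 2000000 in
lemma unbddU3 {l k : ℕ} [IsEmpty (Fin k)] (δ e α b : Fin l → ℝ) (ζ η : Fin k → ℝ) (c : ℝ)
    (i i₀ : Fin l) (hαi : α i = 0) (hbi : b i ≠ 0) (hδi : δ i < 0) (hαi₀ : α i₀ ≠ 0) (M : ℝ) :
    ∃ (x : Fin l → ℝ) (u w : Fin k → ℝ),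
      quadCon α b c x u w = 0 ∧ quadObj δ e ζ η x u w < M := by
  have hii₀ : i ≠ i₀ := fun h => hαi₀ (h ▸ hαi)
  set A := α i₀ with hA
  set B := b i₀ with hB
  have hA2 : (0:ℝ) < A^2 := by positivity
  set σ : ℝ := if 0 < A * b i then -1 else 1 with hσdef
  have hσ : σ = 1 ∨ σ = -1 := by rw [hσdef]; split_ifs <;> simp
  have hσ2 : σ^2 = 1 := by rcases hσ with h | h <;> rw [h] <;> norm_num
  have hκ : 0 < -(A * b i * σ) := by
    have hAb : A * b i ≠ 0 := mul_ne_zero hαi₀ hbi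
    rw [hσdef]
    split_ifs with h
    · simpa using h
    · push_neg at h
      have : A * b i < 0 := lt_of_le_of_ne h hAb
      simpa using this
  set κ : ℝ := -(A * b i * σ) with hκdef
  clear_value σ
  set N : ℝ := |B^2 - 2*A*c| / (2*κ) with hN
  set K₁ : ℝ := (2*B^2 + 2*|B^2 - 2*A*c|)/A^2 with hK₁
  set K₂ : ℝ := (4*κ)/A^2 with hK₂
  clear_value N K₁ K₂
  clear_value κ
  obtain ⟨n, hn1, hnN, hnM⟩ := neg_quad ((1/2) * δ i)
    (|e i| + (1/2)*|δ i₀| *K₂ + |e i₀| *K₂)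
    ((1/2)*|δ i₀| *K₁ + |e i₀| *(1 + K₁)) M N (by linarith)
  have hn0 : (0:ℝ) ≤ n := by linarith
  -- discriminant
  set D : ℝ := B^2 - 2*A*(b i * σ * n + c) with hD
  have hDpos : 0 ≤ D := by
    have h1 : D = (B^2 - 2*A*c) + 2*κ*n := by rw [hD, hκdef]; ring
    have h2 : 2*κ*N = |B^2 - 2*A*c| := by
      rw [hN]; field_simp
    have h3 : 2*κ*N ≤ 2*κ*n := by nlinarith
    have h4 : -(B^2 - 2*A*c) ≤ |B^2 - 2*A*c| := neg_le_abs _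
    linarith
  clear_value D
  set r := Real.sqrt D with hr
  have hr2 : r^2 = D := Real.sq_sqrt hDpos
  have hr0 : 0 ≤ r := Real.sqrt_nonneg _
  clear_value r
  set s : ℝ := (-B + r)/A with hs
  clear_value s
  have h0 : s * A = -B + r := by rw [hs]; field_simp
  have hs_con : (1/2)*A*s^2 + B*s = -(b i * σ * n + c) := by
    have h1 : A * ((1/2)*A*s^2 + B*s) = A * (-(b i * σ * n + c)) := by
      have h2 : A * ((1/2)*A*s^2 + B*s) = (1/2)*(s*A)^2 + B*(s*A) := by ring
      rw [h2, h0]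
      linear_combination (1/2) * hr2 + (1/2) * hD
    exact mul_left_cancel₀ hαi₀ h1
  have hs_sq : s^2 * A^2 = (-B + r)^2 := by
    have : s^2 * A^2 = (s*A)^2 := by ring
    rw [this, h0]
  have hs_bound : s^2 ≤ K₁ + K₂*n := by
    have h1 : (-B + r)^2 ≤ 2*B^2 + 2*D := by nlinarith [sq_nonneg (B + r), hr2]
    have h2 : D ≤ |B^2 - 2*A*c| + 2*κ*n := by
      have : D = (B^2 - 2*A*c) + 2*κ*n := by rw [hD, hκdef]; ring
      have := le_abs_self (B^2 - 2*A*c)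
      linarith
    have h3 : (K₁ + K₂*n) * A^2 = 2*B^2 + 2*|B^2 - 2*A*c| + 4*κ*n := by
      rw [hK₁, hK₂]; field_simp; try ring
    exact le_of_mul_le_mul_right (by linarith [h1, h2, h3, hs_sq]) hA2
  have habs_s : e i₀ * s ≤ |e i₀| * (1 + s^2) := by
    have h1 : e i₀ * s ≤ |e i₀| * |s| := by
      calc e i₀ * s ≤ |e i₀ * s| := le_abs_self _
      _ = |e i₀| * |s| := abs_mul _ _
    have h2 : |s| ≤ 1 + s^2 := by nlinarith [sq_abs s, abs_nonneg s, sq_nonneg (|s| - 1)]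
    nlinarith [abs_nonneg (e i₀)]
  refine ⟨fun t => if t = i then σ*n else if t = i₀ then s else 0,
    fun t => 0, fun t => 0, ?_, ?_⟩
  · unfold quadCon
    have hk0 : ∑ t : Fin k, (0:ℝ) * 0 = 0 := by simp
    have h1 : ∑ t : Fin l, ((1/2) * α t * (if t = i then σ*n else if t = i₀ then s else 0) ^ 2
        + b t * (if t = i then σ*n else if t = i₀ then s else 0))
        = ((1/2) * α i * (σ*n) ^ 2 + b i * (σ*n)) + ((1/2) * α i₀ * s ^ 2 + b i₀ * s) := by
      rw [Finset.sum_eq_add_of_mem i i₀ (Finset.mem_univ _) (Finset.mem_univ _) hii₀ ?_]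
      · rw [if_pos rfl, if_neg (Ne.symm hii₀), if_pos rfl]
      · intro t _ ⟨hti, hti₀⟩
        rw [if_neg hti, if_neg hti₀]; ring
    rw [hk0, h1, hαi]
    rw [hA] at hs_con
    rw [hB] at hs_con
    linarith [hs_con]
  · unfold quadObj
    have hk0 : ∑ t : Fin k, (ζ t * 0 * 0 + (1/2) * (0:ℝ) ^ 2 + η t * 0) = 0 := by simp
    have h1 : ∑ t : Fin l, ((1/2) * δ t * (if t = i then σ*n else if t = i₀ then s else 0) ^ 2
        + e t * (if t = i then σ*n else if t = i₀ then s else 0))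
        = ((1/2) * δ i * (σ*n) ^ 2 + e i * (σ*n)) + ((1/2) * δ i₀ * s ^ 2 + e i₀ * s) := by
      rw [Finset.sum_eq_add_of_mem i i₀ (Finset.mem_univ _) (Finset.mem_univ _) hii₀ ?_]
      · rw [if_pos rfl, if_neg (Ne.symm hii₀), if_pos rfl]
      · intro t _ ⟨hti, hti₀⟩
        rw [if_neg hti, if_neg hti₀]; ring
    rw [hk0, h1, add_zero]
    have hb1 : (1/2) * δ i * (σ*n)^2 = (1/2) * δ i * n^2 := by
      rw [mul_pow, hσ2]; ring
    have hb2 : e i * (σ*n) ≤ |e i| * n := by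
      have h1 : e i * (σ*n) ≤ |e i * (σ*n)| := le_abs_self _
      have h2 : |e i * (σ*n)| = |e i| * (|σ| * |n|) := by rw [abs_mul, abs_mul]
      have h3 : |σ| = 1 := by rcases hσ with h | h <;> rw [h] <;> norm_num
      have h4 : |n| = n := abs_of_nonneg hn0
      rw [h2, h3, h4, one_mul] at h1
      exact h1
    have hb3 : (1/2) * δ i₀ * s^2 ≤ (1/2) * |δ i₀| * (K₁ + K₂*n) := by
      have h1 : δ i₀ * s^2 ≤ |δ i₀| * s^2 := by
        nlinarith [le_abs_self (δ i₀), sq_nonneg s]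
      have h2 : |δ i₀| * s^2 ≤ |δ i₀| * (K₁ + K₂*n) := by
        nlinarith [abs_nonneg (δ i₀)]
      linarith
    have hb4 : e i₀ * s ≤ |e i₀| * (1 + K₁ + K₂*n) := by
      have h2 : |e i₀| * (1 + s^2) ≤ |e i₀| * (1 + (K₁ + K₂*n)) := by
        nlinarith [abs_nonneg (e i₀)]
      calc e i₀ * s ≤ |e i₀| * (1 + s^2) := habs_s
      _ ≤ |e i₀| * (1 + (K₁ + K₂*n)) := h2
      _ = |e i₀| * (1 + K₁ + K₂*n) := by ring
    rw [hb1]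
    nlinarith [hnM]


lemma approxC4 {l k : ℕ} (δ e α b : Fin l → ℝ) (ζ η : Fin k → ℝ) (c c₀ : ℝ)
    (hc₀ : c₀ = -(1/2) * ∑ j, η j ^ 2) (j₀ : Fin k) (hζ : ∀ j, ζ j = ζ j₀)
    (hδ : ∀ i, α i = 0 → 0 ≤ δ i) (x y : Fin l → ℝ) (z : Fin k → ℝ)
    (hcon : socpConLhs α b x y z + c = 0) (hy : ∀ i, (1/2) * x i ^ 2 ≤ y i)
    (ε : ℝ) (hε : 0 < ε) :
    ∃ (x' : Fin l → ℝ) (u w : Fin k → ℝ),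
      quadCon α b c x' u w = 0 ∧
      quadObj δ e ζ η x' u w < socpObj δ e ζ c₀ x y z + ε := by
  obtain ⟨x', hx'1, hx'2⟩ := mainpt δ e α b hδ x y hy
  set s₀ : ℝ := min (Real.sqrt ε) 1 with hs₀def
  have hs₀pos : 0 < s₀ := lt_min (Real.sqrt_pos.mpr hε) one_pos
  have hs₀le : s₀ ≤ Real.sqrt ε := min_le_left _ _
  set τ : ℝ := if 0 < η j₀ then min (η j₀ / 2) s₀ else s₀ with hτdef
  have hτpos : 0 < τ := by
    rw [hτdef]; split_ifs with h
    · exact lt_min (by linarith) hs₀pos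
    · exact hs₀pos
  have hτle : τ ≤ s₀ := by
    rw [hτdef]; split_ifs with h
    · exact min_le_right _ _
    · exact le_refl _
  have hτne : τ - η j₀ ≠ 0 := by
    rw [hτdef]; split_ifs with h
    · have : min (η j₀ / 2) s₀ ≤ η j₀ / 2 := min_le_left _ _
      intro hc; nlinarith
    · push_neg at h
      intro hc; nlinarith
  have hτ2 : (1/2) * τ^2 < ε := by
    have h1 : τ ≤ Real.sqrt ε := le_trans hτle hs₀le
    have h2 : (Real.sqrt ε)^2 = ε := Real.sq_sqrt hε.le
    nlinarith
  clear_value τ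
  clear_value s₀
  set Z : ℝ := ∑ j, z j with hZ
  refine ⟨x', fun j => if j = j₀ then Z / (τ - η j₀) else 0,
    fun j => (if j = j₀ then τ else 0) - η j, ?_, ?_⟩
  · unfold quadCon
    have h1 : ∑ i, ((1/2) * α i * x' i ^ 2 + b i * x' i)
        = ∑ i, (α i * y i + b i * x i) := Finset.sum_congr rfl fun i _ => hx'1 i
    have h2 : ∑ j, ((if j = j₀ then Z / (τ - η j₀) else 0) *
        ((if j = j₀ then τ else 0) - η j)) = Z := by
      rw [Fintype.sum_eq_single j₀ ?_]
      · rw [if_pos rfl, if_pos rfl, div_mul_cancel₀ _ hτne]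
      · intro t ht; rw [if_neg ht]; ring
    rw [h1, h2]
    unfold socpConLhs at hcon
    rw [← hZ] at hcon
    linarith
  · unfold quadObj socpObj
    have hsplit : ∑ j, (ζ j * (if j = j₀ then Z / (τ - η j₀) else 0) *
        ((if j = j₀ then τ else 0) - η j)
        + (1/2) * ((if j = j₀ then τ else 0) - η j) ^ 2
        + η j * ((if j = j₀ then τ else 0) - η j))
        = (∑ j, ζ j * (if j = j₀ then Z / (τ - η j₀) else 0) *
            ((if j = j₀ then τ else 0) - η j))
          + ∑ j, ((1/2) * ((if j = j₀ then τ else 0) - η j) ^ 2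
            + η j * ((if j = j₀ then τ else 0) - η j)) := by
      rw [← Finset.sum_add_distrib]
      exact Finset.sum_congr rfl fun j _ => by ring
    have h3 : ∑ j, ζ j * (if j = j₀ then Z / (τ - η j₀) else 0) *
        ((if j = j₀ then τ else 0) - η j) = ζ j₀ * Z := by
      rw [Fintype.sum_eq_single j₀ ?_]
      · rw [if_pos rfl, if_pos rfl, mul_assoc, div_mul_cancel₀ _ hτne]
      · intro t ht; rw [if_neg ht]; ring
    have h4 : ∑ j, ((1/2) * ((if j = j₀ then τ else 0) - η j) ^ 2
        + η j * ((if j = j₀ then τ else 0) - η j))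
        = (1/2) * τ^2 + c₀ := by
      have h5 : ∀ j, (1/2) * ((if j = j₀ then τ else 0) - η j) ^ 2
          + η j * ((if j = j₀ then τ else 0) - η j)
          = (1/2) * (if j = j₀ then τ else 0)^2 - (1/2) * η j ^ 2 := fun j => by ring
      rw [Finset.sum_congr rfl fun j _ => h5 j, Finset.sum_sub_distrib]
      have h6 : ∑ j, (1/2) * (if j = j₀ then τ else (0:ℝ))^2 = (1/2) * τ^2 := by
        rw [Fintype.sum_eq_single j₀ ?_]
        · rw [if_pos rfl]
        · intro t ht; rw [if_neg ht]; ring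
      rw [h6, ← Finset.mul_sum, hc₀]
      ring
    have h7 : ∑ j, ζ j * z j = ζ j₀ * Z := by
      rw [hZ, Finset.mul_sum]
      exact Finset.sum_congr rfl fun j _ => by rw [hζ j]
    have h8 : ∑ i, ((1/2) * δ i * x' i ^ 2 + e i * x' i)
        ≤ ∑ i, (δ i * y i + e i * x i) := Finset.sum_le_sum fun i _ => hx'2 i
    rw [hsplit, h3, h4, h7]
    linarith

lemma quadCon_empty {l k : ℕ} [IsEmpty (Fin k)] (α b : Fin l → ℝ) (c : ℝ)
    (x : Fin l → ℝ) (u w : Fin k → ℝ) :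
    quadCon α b c x u w = (∑ i, ((1/2) * α i * x i ^ 2 + b i * x i)) + c := by
  unfold quadCon
  simp [Finset.univ_eq_empty]

lemma approxC5 {l k : ℕ} [IsEmpty (Fin k)] (δ e α b : Fin l → ℝ) (ζ η : Fin k → ℝ) (c c₀ : ℝ)
    (hc₀ : c₀ = -(1/2) * ∑ j, η j ^ 2)
    (hδ : ∀ i, α i = 0 → 0 ≤ δ i) (x y : Fin l → ℝ) (z : Fin k → ℝ)
    (hcon : socpConLhs α b x y z + c = 0) (hy : ∀ i, (1/2) * x i ^ 2 ≤ y i) :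
    ∃ (x' : Fin l → ℝ) (u w : Fin k → ℝ),
      quadCon α b c x' u w = 0 ∧
      quadObj δ e ζ η x' u w ≤ socpObj δ e ζ c₀ x y z := by
  obtain ⟨x', hx'1, hx'2⟩ := mainpt δ e α b hδ x y hy
  have hc₀0 : c₀ = 0 := by rw [hc₀]; simp [Finset.univ_eq_empty]
  refine ⟨x', fun _ => 0, fun _ => 0, ?_, ?_⟩
  · rw [quadCon_empty]
    have h1 : ∑ i, ((1/2) * α i * x' i ^ 2 + b i * x' i)
        = ∑ i, (α i * y i + b i * x i) := Finset.sum_congr rfl fun i _ => hx'1 i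
    rw [h1]
    unfold socpConLhs at hcon
    simpa [Finset.univ_eq_empty] using hcon
  · unfold quadObj socpObj
    have h8 : ∑ i, ((1/2) * δ i * x' i ^ 2 + e i * x' i)
        ≤ ∑ i, (δ i * y i + e i * x i) := Finset.sum_le_sum fun i _ => hx'2 i
    rw [hc₀0]
    simp only [Finset.univ_eq_empty, Finset.sum_empty]
    linarith

/-- Theorem 3.3 of Jiang–Li–Wu: under the two-side Slater condition and `A ≠ 0`, the
equality-constrained GTRS (EP) in separated canonical form has the same optimal value as its
SOCP reformulation (EP₁); if (EP₁) attains its optimal value, it does so at a point with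
`½xᵢ² = yᵢ` for all `i`; and if two `2×2` blocks have different eigenvalues then (EP) is
unbounded from below. -/
theorem stmt_14 (l k : ℕ) (δ e α b : Fin l → ℝ) (ζ η : Fin k → ℝ) (c c₀ : ℝ)
    (hc₀ : c₀ = -(1/2) * ∑ j, η j ^ 2)
    (hneg : ∃ (x : Fin l → ℝ) (u w : Fin k → ℝ), quadCon α b c x u w < 0)
    (hpos : ∃ (x : Fin l → ℝ) (u w : Fin k → ℝ), 0 < quadCon α b c x u w)
    (hAne : 1 ≤ k ∨ ∃ i, α i ≠ 0) :
    sInf {v : EReal | ∃ (x : Fin l → ℝ) (u w : Fin k → ℝ),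
        quadCon α b c x u w = 0 ∧ v = (quadObj δ e ζ η x u w : EReal)} =
      socpValEq δ e α b ζ c c₀ ∧
    ((∃ (x y : Fin l → ℝ) (z : Fin k → ℝ), socpConLhs α b x y z + c = 0 ∧
        (∀ i, (1/2) * x i ^ 2 ≤ y i) ∧
        (socpObj δ e ζ c₀ x y z : EReal) = socpValEq δ e α b ζ c c₀) →
      ∃ (x y : Fin l → ℝ) (z : Fin k → ℝ), socpConLhs α b x y z + c = 0 ∧
        (∀ i, (1/2) * x i ^ 2 ≤ y i) ∧ (∀ i, (1/2) * x i ^ 2 = y i) ∧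
        (socpObj δ e ζ c₀ x y z : EReal) = socpValEq δ e α b ζ c c₀) ∧
    ((∃ i j : Fin k, i ≠ j ∧ ζ i ≠ ζ j) →
      ∀ M : ℝ, ∃ (x : Fin l → ℝ) (u w : Fin k → ℝ),
        quadCon α b c x u w = 0 ∧ quadObj δ e ζ η x u w < M) := by
  have hPart3 : (∃ i j : Fin k, i ≠ j ∧ ζ i ≠ ζ j) →
      ∀ M : ℝ, ∃ (x : Fin l → ℝ) (u w : Fin k → ℝ),
        quadCon α b c x u w = 0 ∧ quadObj δ e ζ η x u w < M := by
    rintro ⟨i, j, hij, hζ⟩ M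
    exact unbddA δ e α b ζ η c i j hij hζ M
  have hEasy : socpValEq δ e α b ζ c c₀ ≤
      sInf {v : EReal | ∃ (x : Fin l → ℝ) (u w : Fin k → ℝ),
        quadCon α b c x u w = 0 ∧ v = (quadObj δ e ζ η x u w : EReal)} := by
    apply le_sInf
    rintro v ⟨x, u, w, hcon, rfl⟩
    obtain ⟨hc', hobj⟩ := easy_pt δ e α b ζ η c c₀ hc₀ x u w
    unfold socpValEq
    refine le_trans (sInf_le ?_) (EReal.coe_le_coe_iff.mpr hobj)
    exact ⟨x, fun i => (1/2) * x i ^ 2, fun j => u j * w j,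
      by rw [hc']; exact hcon, fun i => le_refl _, rfl⟩
  have hHard : sInf {v : EReal | ∃ (x : Fin l → ℝ) (u w : Fin k → ℝ),
      quadCon α b c x u w = 0 ∧ v = (quadObj δ e ζ η x u w : EReal)} ≤
      socpValEq δ e α b ζ c c₀ := by
    by_cases hA : ∃ i j : Fin k, i ≠ j ∧ ζ i ≠ ζ j
    · have hbot : sInf {v : EReal | ∃ (x : Fin l → ℝ) (u w : Fin k → ℝ),
          quadCon α b c x u w = 0 ∧ v = (quadObj δ e ζ η x u w : EReal)} = ⊥ := by
        apply ereal_sInf_eq_bot_of_unbdd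
        intro M
        obtain ⟨x, u, w, h1, h2⟩ := hPart3 hA M
        exact ⟨_, ⟨x, u, w, h1, rfl⟩, by exact_mod_cast h2⟩
      rw [hbot]; exact bot_le
    · push_neg at hA
      by_cases hU : ∃ i, α i = 0 ∧ δ i < 0
      · obtain ⟨i, hαi, hδi⟩ := hU
        have hbot : sInf {v : EReal | ∃ (x : Fin l → ℝ) (u w : Fin k → ℝ),
            quadCon α b c x u w = 0 ∧ v = (quadObj δ e ζ η x u w : EReal)} = ⊥ := by
          apply ereal_sInf_eq_bot_of_unbdd
          intro M
          by_cases hk : Nonempty (Fin k)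
          · obtain ⟨j₀⟩ := hk
            obtain ⟨x, u, w, h1, h2⟩ := unbddU1 δ e α b ζ η c i hαi hδi j₀ M
            exact ⟨_, ⟨x, u, w, h1, rfl⟩, by exact_mod_cast h2⟩
          · have hke : IsEmpty (Fin k) := not_nonempty_iff.mp hk
            have hi₀ : ∃ i₀, α i₀ ≠ 0 := by
              rcases hAne with hk1 | h
              · exact absurd ⟨⟨0, by omega⟩⟩ hk
              · exact h
            obtain ⟨i₀, hαi₀⟩ := hi₀
            by_cases hbi : b i = 0
            · obtain ⟨xm, um, wm, hm⟩ := hneg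
              obtain ⟨xp, up, wp, hp⟩ := hpos
              rw [quadCon_empty] at hm hp
              obtain ⟨x₀, hx₀⟩ := exists_root l α b c xm xp hm hp
              obtain ⟨x, u, w, h1, h2⟩ := unbddU2 δ e α b ζ η c i hαi hbi hδi x₀ hx₀ M
              exact ⟨_, ⟨x, u, w, h1, rfl⟩, by exact_mod_cast h2⟩
            · obtain ⟨x, u, w, h1, h2⟩ := unbddU3 δ e α b ζ η c i i₀ hαi hbi hδi hαi₀ M
              exact ⟨_, ⟨x, u, w, h1, rfl⟩, by exact_mod_cast h2⟩
        rw [hbot]; exact bot_le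
      · have hδ' : ∀ t, α t = 0 → 0 ≤ δ t :=
          fun t ht => le_of_not_gt fun hlt => hU ⟨t, ht, hlt⟩
        unfold socpValEq
        apply le_sInf
        rintro v ⟨x, y, z, hcon, hy, rfl⟩
        by_cases hk : Nonempty (Fin k)
        · obtain ⟨j₀⟩ := hk
          have hζall : ∀ j, ζ j = ζ j₀ := by
            intro j
            by_cases h : j = j₀
            · rw [h]
            · exact hA j j₀ h
          apply ereal_le_of_forall_eps
          intro ε hε
          obtain ⟨x', u, w, h1, h2⟩ :=
            approxC4 δ e α b ζ η c c₀ hc₀ j₀ hζall hδ' x y z hcon hy ε hε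
          refine le_trans (sInf_le ⟨x', u, w, h1, rfl⟩) ?_
          exact EReal.coe_le_coe_iff.mpr (le_of_lt h2)
        · have hke : IsEmpty (Fin k) := not_nonempty_iff.mp hk
          obtain ⟨x', u, w, h1, h2⟩ := approxC5 δ e α b ζ η c c₀ hc₀ hδ' x y z hcon hy
          refine le_trans (sInf_le ⟨x', u, w, h1, rfl⟩) ?_
          exact EReal.coe_le_coe_iff.mpr h2
  refine ⟨le_antisymm hHard hEasy, ?_, hPart3⟩
  rintro ⟨x, y, z, hcon, hy, hval⟩
  have hδ0 : ∀ t, α t = 0 → 0 ≤ δ t := by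
    intro t hαt
    by_contra hd
    push_neg at hd
    have hcon' : socpConLhs α b x (fun s => if s = t then y t + 1 else y s) z + c = 0 := by
      unfold socpConLhs at hcon ⊢
      have h1 : ∑ s, (α s * (if s = t then y t + 1 else y s) + b s * x s)
          = ∑ s, (α s * y s + b s * x s) := by
        refine Finset.sum_congr rfl fun s _ => ?_
        by_cases hs : s = t
        · subst hs; rw [if_pos rfl, hαt]; ring
        · rw [if_neg hs]
      rw [h1]; exact hcon
    have hy' : ∀ s, (1/2) * x s ^ 2 ≤ (fun s => if s = t then y t + 1 else y s) s := by
      intro s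
      by_cases hs : s = t
      · subst hs; show (1/2) * x s ^ 2 ≤ if s = s then y s + 1 else y s
        rw [if_pos rfl]; linarith [hy s]
      · show (1/2) * x s ^ 2 ≤ if s = t then y t + 1 else y s
        rw [if_neg hs]; exact hy s
    have hval' : socpObj δ e ζ c₀ x (fun s => if s = t then y t + 1 else y s) z
        = socpObj δ e ζ c₀ x y z + δ t := by
      unfold socpObj
      have h1 : (∑ s, (δ s * (if s = t then y t + 1 else y s) + e s * x s))
          - ∑ s, (δ s * y s + e s * x s) = δ t := by
        rw [← Finset.sum_sub_distrib, Fintype.sum_eq_single t ?_]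
        · rw [if_pos rfl]; ring
        · intro s hs; rw [if_neg hs]; ring
      linarith
    have hmem : socpValEq δ e α b ζ c c₀ ≤ ((socpObj δ e ζ c₀ x y z + δ t : ℝ) : EReal) := by
      unfold socpValEq
      apply sInf_le
      exact ⟨x, _, z, hcon', hy', by rw [hval']⟩
    rw [← hval] at hmem
    have hragg : socpObj δ e ζ c₀ x y z ≤ socpObj δ e ζ c₀ x y z + δ t :=
      EReal.coe_le_coe_iff.mp hmem
    linarith
  obtain ⟨x', hx'1, hx'2⟩ := mainpt δ e α b hδ0 x y hy
  have hcon'' : socpConLhs α b x' (fun i => (1/2) * x' i ^ 2) z + c = 0 := by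
    unfold socpConLhs at hcon ⊢
    have h1 : ∑ i, (α i * ((1/2) * x' i ^ 2) + b i * x' i)
        = ∑ i, (α i * y i + b i * x i) := by
      refine Finset.sum_congr rfl fun i _ => ?_
      rw [← hx'1 i]; ring
    rw [h1]; exact hcon
  have hVle : socpObj δ e ζ c₀ x' (fun i => (1/2) * x' i ^ 2) z ≤ socpObj δ e ζ c₀ x y z := by
    unfold socpObj
    have h8 : ∑ i, (δ i * ((1/2) * x' i ^ 2) + e i * x' i)
        ≤ ∑ i, (δ i * y i + e i * x i) := by
      refine Finset.sum_le_sum fun i _ => ?_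
      have heq : δ i * ((1/2) * x' i ^ 2) = (1/2) * δ i * x' i ^ 2 := by ring
      linarith [hx'2 i, heq]
    linarith
  have hmem2 : socpValEq δ e α b ζ c c₀ ≤
      ((socpObj δ e ζ c₀ x' (fun i => (1/2) * x' i ^ 2) z : ℝ) : EReal) := by
    unfold socpValEq
    exact sInf_le ⟨x', _, z, hcon'', fun i => le_refl _, rfl⟩
  have hle2 : ((socpObj δ e ζ c₀ x' (fun i => (1/2) * x' i ^ 2) z : ℝ) : EReal) ≤
      socpValEq δ e α b ζ c c₀ := by
    rw [← hval]
    exact EReal.coe_le_coe_iff.mpr hVle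
  exact ⟨x', fun i => (1/2) * x' i ^ 2, z, hcon'', fun i => le_refl _, fun i => rfl,
    le_antisymm hle2 hmem2⟩
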